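/- arXiv:1611.00476 — 3 statements merged into one kernel-verified Lean document; each statement's English description precedes it below -/
import Mathlib

section
/- Let W_T := α(T*) v⁽ⁿ⁾ θ(T) where T ∈ (ρ_ξ, γ_ρⁿ) is an isometry, with the standing assumptions: α : M → P a *-isomorphism, θ a *-isomorphism from the intertwiner algebra (γ_ρⁿ, γ_ρⁿ) onto (γ_σⁿ, γ_σⁿ) such that Ad(v⁽ⁿ⁾*)∘α agrees with θ on (γ_ρⁿ, γ_ρⁿ), and θ maps isometries in (ρ_ξ, γ_ρⁿ) to isometries in (σ_{F(ξ)}, γ_σⁿ). Then for any two isometries T, S ∈ (ρ_ξ, γ_ρⁿ), W_T is a unitary and W_T = W_S. -/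
/-- with `W_T := α(T*) vⁿ θ(T)` for an isometry `T ∈ (ρ_ξ, γⁿ)`,
where `Ad(vⁿ*) ∘ α = θ` on the relative commutant `(γⁿ, γⁿ)` and θ is a
multiplicative *-preserving map, `W_T` is a unitary and `W_T = W_S` for any two
isometries `T, S ∈ (ρ_ξ, γⁿ)`. -/
theorem stmt9 {M P : Type*} [Ring M] [StarRing M] [Ring P] [StarRing P]
    (α : M ≃* P) (hαstar : ∀ x, α (star x) = star (α x))
    (θ : M → P)
    (hθmul : ∀ a b, θ (a * b) = θ a * θ b)
    (hθstar : ∀ a, θ (star a) = star (θ a))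
    (hθ1 : θ 1 = 1)
    (ρξ γn : M → M)
    (hρstar : ∀ x, ρξ (star x) = star (ρξ x))
    (hγstar : ∀ x, γn (star x) = star (γn x))
    (v : P) (hv₁ : v * star v = 1) (hv₂ : star v * v = 1)
    (hαθ : ∀ X : M, (∀ x, X * γn x = γn x * X) → α X = v * θ X * star v)
    (T S : M)
    (hT : star T * T = 1) (hTint : ∀ x, T * ρξ x = γn x * T)
    (hS : star S * S = 1) (hSint : ∀ x, S * ρξ x = γn x * S) :
    (star (α (star T) * v * θ T) * (α (star T) * v * θ T) = 1 ∧
      (α (star T) * v * θ T) * star (α (star T) * v * θ T) = 1) ∧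
    α (star T) * v * θ T = α (star S) * v * θ S := by
  have hv₂' : ∀ x : P, star v * (v * x) = x := fun x => by rw [← mul_assoc, hv₂, one_mul]
  have hαT : star (α (star T)) = α T := by rw [← hαstar, star_star]
  have hαS : star (α (star S)) = α S := by rw [← hαstar, star_star]
  -- key: α of R * star R' when both intertwine
  have key : ∀ R R' : M, (∀ x, R * ρξ x = γn x * R) → (∀ x, R' * ρξ x = γn x * R') →
      α (R * star R') = v * (θ R * (star (θ R') * star v)) := by
    intro R R' hR hR'
    have h1 : ∀ x, ρξ x * star R' = star R' * γn x := by
      intro x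
      have h := congrArg star (hR' (star x))
      simpa [star_mul, star_star, hρstar, hγstar] using h
    have hcomm : ∀ x, (R * star R') * γn x = γn x * (R * star R') := by
      intro x
      calc R * star R' * γn x = R * (ρξ x * star R') := by rw [mul_assoc, ← h1 x]
        _ = γn x * (R * star R') := by rw [← mul_assoc, hR, mul_assoc]
    rw [hαθ _ hcomm, hθmul, hθstar, mul_assoc, mul_assoc]
  -- θ of an isometry is an isometry
  have hθiso : ∀ R : M, star R * R = 1 → star (θ R) * θ R = 1 := by
    intro R hR
    rw [← hθstar, ← hθmul, hR, hθ1]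
  -- left unitarity, generic
  have unit1 : ∀ R : M, star R * R = 1 → (∀ x, R * ρξ x = γn x * R) →
      star (α (star R) * v * θ R) * (α (star R) * v * θ R) = 1 := by
    intro R hR hRint
    have hαR : star (α (star R)) = α R := by rw [← hαstar, star_star]
    have hθR := hθiso R hR
    have hθR' : ∀ x : P, star (θ R) * (θ R * x) = x := fun x => by
      rw [← mul_assoc, hθR, one_mul]
    have hAA : ∀ x : P, α R * (α (star R) * x)
        = v * (θ R * (star (θ R) * (star v * x))) := by
      intro x
      rw [← mul_assoc, ← map_mul α, key R R hRint hRint]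
      simp [mul_assoc]
    simp only [star_mul, mul_assoc, hαR, hAA, hv₂', hθR', hθR]
  refine ⟨⟨unit1 T hT hTint, ?_⟩, ?_⟩
  · -- right unitarity
    have hBB : ∀ x : P, v * (θ T * (star (θ T) * (star v * x)))
        = α (T * star T) * x := by
      intro x
      rw [key T T hTint hTint]
      simp [mul_assoc]
    have h1 : star T * (T * star T * T) = 1 := by
      rw [mul_assoc T, hT, mul_one, hT]
    calc (α (star T) * v * θ T) * star (α (star T) * v * θ T)
        = α (star T) * (v * (θ T * (star (θ T) * (star v * α T)))) := by
          simp only [star_mul, mul_assoc, hαT]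
      _ = α (star T) * (α (T * star T) * α T) := by rw [hBB]
      _ = α (star T * (T * star T * T)) := by rw [← map_mul, ← map_mul]
      _ = 1 := by rw [h1, map_one]
  · -- W_T = W_S
    have hCC : ∀ x : P, v * (θ T * (star (θ S) * (star v * x)))
        = α (T * star S) * x := by
      intro x
      rw [key T S hTint hSint]
      simp [mul_assoc]
    have h1 : star T * (T * star S * S) = 1 := by
      rw [mul_assoc T, hS, mul_one, hT]
    have hTS : (α (star T) * v * θ T) * star (α (star S) * v * θ S) = 1 := by
      calc (α (star T) * v * θ T) * star (α (star S) * v * θ S)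
          = α (star T) * (v * (θ T * (star (θ S) * (star v * α S)))) := by
            simp only [star_mul, mul_assoc, hαS]
        _ = α (star T) * (α (T * star S) * α S) := by rw [hCC]
        _ = α (star T * (T * star S * S)) := by rw [← map_mul, ← map_mul]
        _ = 1 := by rw [h1, map_one]
    have hSunit := unit1 S hS hSint
    calc α (star T) * v * θ T
        = α (star T) * v * θ T * (star (α (star S) * v * θ S) * (α (star S) * v * θ S)) := by
          rw [hSunit, mul_one]
      _ = ((α (star T) * v * θ T) * star (α (star S) * v * θ S)) * (α (star S) * v * θ S) := by
          simp only [mul_assoc]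
      _ = α (star S) * v * θ S := by rw [hTS, one_mul]
end

section
/- With the notation of the main construction, the unitary W_T is independent of the level n: if T ∈ (ρ_ξ, γ_ρⁿ) is an isometry and R̄_ρ ∈ (id, γ_ρ) is an isometry with θ(R̄_ρ) = R̄_σ = v⁽¹⁾* α(R̄_ρ), then W_{R̄_ρ T} = W_T, where R̄_ρ T ∈ (ρ_ξ, γ_ρⁿ⁺¹) and W_S = α(S*) v⁽ᵐ⁾ θ(S) for S ∈ (ρ_ξ, γ_ρᵐ). -/
/-- the unitary `W_T` is independent of the level `n`:
`W_{R̄ρ T} = W_T`, where `W_S = α(S*) v⁽ᵐ⁾ θ(S)`, `v⁽ⁿ⁺¹⁾ = v⁽¹⁾ γ_σ(v⁽ⁿ⁾)`,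
`θ(R̄ρ) = R̄σ = v⁽¹⁾* α(R̄ρ)` and `R̄σ ∈ (id, γσ)` is an isometry. -/
theorem stmt10 {M P : Type*} [Ring M] [StarRing M] [Ring P] [StarRing P]
    (α : M ≃* P) (hαstar : ∀ x, α (star x) = star (α x))
    (θ : M → P)
    (hθmul : ∀ a b, θ (a * b) = θ a * θ b)
    (hθstar : ∀ a, θ (star a) = star (θ a))
    (hθ1 : θ 1 = 1)
    (γσ : P → P)
    (v : ℕ → P) (hv : ∀ n, v (n + 1) = v 1 * γσ (v n))
    (Rb T : M) (n : ℕ)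
    (hRbiso : star Rb * Rb = 1) (hTiso : star T * T = 1)
    (hRσ : θ Rb = star (v 1) * α Rb)
    (hRσint : ∀ y : P, θ Rb * y = γσ y * θ Rb) :
    α (star (Rb * T)) * v (n + 1) * θ (Rb * T) =
      α (star T) * v n * θ T := by
  have h1 : α (star Rb) * v 1 = θ (star Rb) := by
    rw [hθstar, hRσ, star_mul, star_star, hαstar]
  have key : α (star Rb) * (v 1 * γσ (v n)) * θ Rb = v n := by
    calc α (star Rb) * (v 1 * γσ (v n)) * θ Rb
        = (α (star Rb) * v 1) * (γσ (v n) * θ Rb) := by noncomm_ring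
      _ = θ (star Rb) * (θ Rb * v n) := by rw [h1, ← hRσint]
      _ = (θ (star Rb) * θ Rb) * v n := by rw [mul_assoc]
      _ = v n := by rw [← hθmul, hRbiso, hθ1, one_mul]
  calc α (star (Rb * T)) * v (n + 1) * θ (Rb * T)
      = α (star T) * (α (star Rb) * (v 1 * γσ (v n)) * θ Rb) * θ T := by
        rw [star_mul, map_mul, hv, hθmul]; noncomm_ring
    _ = α (star T) * v n * θ T := by rw [key]
end

section
/- With the standing assumptions of the main construction, W_T is an intertwiner from σ_{F(ξ)}∘α to α∘ρ_ξ: for all x ∈ M, α(ρ_ξ(x)) W_T = W_T σ_{F(ξ)}(α(x)), where W_T = α(T*) v⁽ⁿ⁾ θ(T) for an isometry T ∈ (ρ_ξ, γ_ρⁿ). -/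
/-- `W_T = α(T*) v⁽ⁿ⁾ θ(T)` intertwines `σ_{F(ξ)} ∘ α` and
`α ∘ ρ_ξ`: `α(ρ_ξ(x)) W_T = W_T σ_{F(ξ)}(α(x))` for all `x`. -/
theorem stmt11 {M P : Type*} [Ring M] [StarRing M] [Ring P] [StarRing P]
    (α : M ≃* P)
    (ρξ γn : M → M)
    (hρstar : ∀ x, ρξ (star x) = star (ρξ x))
    (hγstar : ∀ x, γn (star x) = star (γn x))
    (σξ γσn : P → P)
    (T : M) (hTiso : star T * T = 1) (hTint : ∀ x, T * ρξ x = γn x * T)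
    (θT : P) (hθT : ∀ y, θT * σξ y = γσn y * θT)
    (v : P) (hv : ∀ x, α (γn x) * v = v * γσn (α x)) :
    ∀ x, α (ρξ x) * (α (star T) * v * θT) =
      (α (star T) * v * θT) * σξ (α x) := by
  intro x
  have h1 : ρξ x * star T = star T * γn x := by
    have := congrArg star (hTint (star x))
    simpa [hρstar, hγstar, star_mul] using this
  calc α (ρξ x) * (α (star T) * v * θT)
      = α (ρξ x * star T) * v * θT := by rw [map_mul]; simp only [mul_assoc]
    _ = α (star T) * (α (γn x) * v) * θT := by rw [h1, map_mul]; simp only [mul_assoc]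
    _ = α (star T) * (v * γσn (α x)) * θT := by rw [hv]
    _ = α (star T) * v * (θT * σξ (α x)) := by rw [hθT]; simp only [mul_assoc]
    _ = (α (star T) * v * θT) * σξ (α x) := by simp only [mul_assoc]
end
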